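/- Let A be a Markov automaton that couples, and let u_{-1}, u_{-2}, ... be i.i.d. letters from D. Define S_i = S · (u_{-i}, ..., u_{-1}) and let τ^b be the first i such that S_i is a singleton. Then τ^b is almost surely finite, and for all n ≥ τ^b, S_n equals S_{τ^b} (the singleton value is stable under further backward extension). -/

import Mathlib

open MeasureTheory

/-- The backward set `S_i = S · (u_{-i}, ..., u_{-1})` of the coupling-from-the-past
construction, where `v k = u_{-(k+1)}`: the letter `u_{-i} = v (i-1)` is applied first. -/
def backSet {S A : Type} (act : S → A → S) (v : ℕ → A) (i : ℕ) : Set S :=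
  Set.range fun x : S => (((List.range i).reverse).map v).foldl act x

lemma backSet_mono' {S A : Type} (act : S → A → S) (v : ℕ → A) {i n : ℕ} (h : i ≤ n) :
    backSet act v n ⊆ backSet act v i := by
  obtain ⟨d, rfl⟩ : ∃ d, n = i + d := ⟨n - i, (Nat.add_sub_cancel' h).symm⟩
  rintro _ ⟨x, rfl⟩
  simp only [backSet, List.range_add, List.reverse_append, List.map_append, List.foldl_append]
  exact ⟨_, rfl⟩

lemma blockLemma' {S A : Type} (act : S → A → S) (u : List A)
    (hu : ∀ x y : S, u.foldl act x = u.foldl act y) (v : ℕ → A) (j : ℕ)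
    (hb : ∀ s : Fin u.length, v (j + s) = u.reverse.get ⟨s, by simp⟩) :
    (backSet act v (j + u.length)).Subsingleton := by
  have hword : ((List.range u.length).map (fun s => j + s)).map v = u.reverse := by
    apply List.ext_getElem
    · simp
    · intro k h1 h2
      simp only [List.getElem_map, List.getElem_range]
      simpa using hb ⟨k, by simpa using h2⟩
  rintro _ ⟨x, rfl⟩ _ ⟨y, rfl⟩
  simp only [List.range_add, List.reverse_append, List.map_append, List.foldl_append,
    ← List.map_reverse]
  have h2 : List.map v (List.map (fun s => j + s) ((List.range u.length).reverse)) = u := by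
    rw [List.map_reverse, List.map_reverse, hword, List.reverse_reverse]
  rw [h2, hu x y]

theorem stmt1 {S A : Type} [Fintype S] [Nonempty S] [Fintype A]
    (D : A → ENNReal) (hDsum : ∑ a, D a = 1) (hDpos : ∀ a, 0 < D a)
    (act : S → A → S)
    (hcouple : ∃ u : List A, ∀ x y : S, u.foldl act x = u.foldl act y)
    {Ω : Type} [MeasurableSpace Ω] (μ : Measure Ω) [IsProbabilityMeasure μ]
    (U : ℕ → Ω → A)
    (hiid : ∀ (k : ℕ) (a : Fin k → A),
      μ {ω | ∀ i : Fin k, U (i : ℕ) ω = a i} = ∏ i, D (a i)) :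
    (∀ᵐ ω ∂μ, ∃ i : ℕ, (backSet act (fun k => U k ω) i).Subsingleton) ∧
    (∀ (v : ℕ → A) (i n : ℕ), i ≤ n → (backSet act v i).Subsingleton →
      backSet act v n = backSet act v i) := by
  classical
  constructor
  · -- probabilistic part
    obtain ⟨u, hu⟩ := hcouple
    set L := u.length with hL
    set w : Fin L → A := fun s => u.reverse.get ⟨s, by simpa [hL] using s.isLt⟩ with hw
    set p : ENNReal := ∏ t, D (w t) with hp
    -- basic facts about p
    have hsumall : ∑ b : Fin L → A, ∏ t, D (b t) = 1 := by
      rw [← Fintype.piFinset_univ, ← Finset.prod_univ_sum]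
      simp [hDsum]
    have hsplit : p + ∑ b ∈ Finset.univ.erase w, ∏ t, D (b t) = 1 := by
      rw [← hsumall, ← Finset.add_sum_erase Finset.univ _ (Finset.mem_univ w)]
    have hpne_top : p ≠ ⊤ := by
      intro h
      rw [h] at hsplit
      simp at hsplit
    have hrest : ∑ b ∈ Finset.univ.erase w, ∏ t, D (b t) = 1 - p := by
      rw [← hsplit]
      rw [add_comm] at hsplit ⊢
      exact (ENNReal.eq_sub_of_add_eq hpne_top rfl)
    have hp0 : p ≠ 0 := by
      rw [hp, Finset.prod_ne_zero_iff]
      exact fun t _ => (hDpos (w t)).ne'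
    have h1p : (1 : ENNReal) - p < 1 :=
      ENNReal.sub_lt_self ENNReal.one_ne_top one_ne_zero hp0
    -- the bad event
    set Bad : Set Ω := {ω | ¬ ∃ i : ℕ, (backSet act (fun k => U k ω) i).Subsingleton}
      with hBad
    have key : ∀ m : ℕ, μ Bad ≤ (1 - p) ^ m := by
      intro m
      set T : Finset (Fin m → Fin L → A) :=
        Fintype.piFinset (fun _ => Finset.univ.erase w) with hT
      set C : (Fin m → Fin L → A) → Set Ω := fun f =>
        {ω | ∀ i : Fin (m * L),
          U (i : ℕ) ω = f (finProdFinEquiv.symm i).1 (finProdFinEquiv.symm i).2} with hC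
      have hcover : Bad ⊆ ⋃ f ∈ T, C f := by
        intro ω hω
        set f : Fin m → Fin L → A := fun k t => U ((finProdFinEquiv (k, t) : Fin (m*L)) : ℕ) ω
          with hf
        have hfT : f ∈ T := by
          rw [hT, Fintype.mem_piFinset]
          intro k
          rw [Finset.mem_erase]
          refine ⟨?_, Finset.mem_univ _⟩
          intro hfk
          apply hω
          refine ⟨L * (k : ℕ) + L, ?_⟩
          have := blockLemma' act u hu (fun n => U n ω) (L * (k : ℕ)) ?_
          · exact this
          · intro s
            have : U ((s : ℕ) + L * (k : ℕ)) ω = w s := by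
              have := congrFun hfk s
              rw [hf] at this
              simpa [finProdFinEquiv] using this
            rw [add_comm (L * (k : ℕ)) (s : ℕ)]
            exact this
        exact Set.mem_biUnion hfT (by
          intro i
          rw [hf]
          congr 1
          simp [Nat.mod_add_div])
      have hmeas : ∀ f, μ (C f) = ∏ k, ∏ t, D (f k t) := by
        intro f
        rw [hC]
        rw [hiid (m * L) (fun i => f (finProdFinEquiv.symm i).1 (finProdFinEquiv.symm i).2)]
        rw [← Fintype.prod_prod_type' (fun k t => D (f k t))]
        exact (Fintype.prod_equiv finProdFinEquiv _ _ (by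
          intro x
          simp)).symm
      calc μ Bad ≤ μ (⋃ f ∈ T, C f) := measure_mono hcover
        _ ≤ ∑ f ∈ T, μ (C f) := measure_biUnion_finset_le T C
        _ = ∑ f ∈ T, ∏ k, ∏ t, D (f k t) := Finset.sum_congr rfl (fun f _ => hmeas f)
        _ = ∏ _k : Fin m, ∑ b ∈ Finset.univ.erase w, ∏ t, D (b t) := by
            rw [Finset.prod_univ_sum]
        _ = (1 - p) ^ m := by rw [hrest, Finset.prod_const, Finset.card_univ, Fintype.card_fin]
    have hBad0 : μ Bad = 0 := by
      have htend : Filter.Tendsto (fun m : ℕ => (1 - p) ^ m) Filter.atTop (nhds 0) :=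
        ENNReal.tendsto_pow_atTop_nhds_zero_of_lt_one h1p
      have := ge_of_tendsto htend (Filter.Eventually.of_forall key)
      exact le_antisymm this zero_le
    rw [ae_iff]
    exact hBad0
  · -- deterministic part
    intro v i n hin hsub
    have hmono := backSet_mono' act v hin
    apply Set.Subset.antisymm hmono
    intro y hy
    obtain ⟨e, he⟩ : (backSet act v n).Nonempty :=
      ⟨_, Set.mem_range_self (Classical.arbitrary S)⟩
    have : e = y := hsub (hmono he) hy
    rwa [← this]
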